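/- Let D ≥ 1 and C ⊆ R^D a compact convex set. Let w be the minimal width of C, i.e., w := min over unit vectors α of (max_{z∈C} αᵀz − min_{z∈C} αᵀz). Then vol(C) ≥ (w/(2D))^D · v_D, where v_D is the volume of the unit ball in R^D. -/

import Mathlib

open Metric Set MeasureTheory Module
open scoped RealInnerProductSpace NNReal

local notation "E" D => EuclideanSpace ℝ (Fin D)

set_option maxHeartbeats 1000000 in
lemma exists_closedBall_subset (D : ℕ) (hD : 1 ≤ D) (C : Set (E D))
    (hC : IsCompact C) (hconv : Convex ℝ C) (hne : C.Nonempty) (w : ℝ)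
    (hw : ∀ α : E D, ‖α‖ = 1 →
      w ≤ sSup ((fun z => (inner ℝ α z : ℝ)) '' C) - sInf ((fun z => (inner ℝ α z : ℝ)) '' C)) :
    ∃ c, Metric.closedBall c (w / (2 * D)) ⊆ C := by
  classical
  -- support function
  set h : (E D) → ℝ := fun u => sSup ((fun z => ⟪u, z⟫) '' C) with hh
  have hcomp : ∀ u : E D, IsCompact ((fun z => ⟪u, z⟫) '' C) :=
    fun u => hC.image (continuous_const.inner continuous_id)
  have hmem : ∀ (u : E D) z, z ∈ C → ⟪u, z⟫ ≤ h u := by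
    intro u z hz
    exact le_csSup (hcomp u).bddAbove (mem_image_of_mem _ hz)
  have hattain : ∀ u : E D, ∃ z ∈ C, h u = ⟪u, z⟫ := by
    intro u
    obtain ⟨z, hz, hz'⟩ := (hcomp u).sSup_mem (hne.image _)
    exact ⟨z, hz, hz'.symm⟩
  -- bound on C
  obtain ⟨R, hR0, hRC⟩ : ∃ R, 0 < R ∧ C ⊆ closedBall 0 R := by
    obtain ⟨R, hR, hRC⟩ := hC.isBounded.subset_closedBall_lt 0 0
    exact ⟨R, hR, hRC⟩
  have hnorm : ∀ z ∈ C, ‖z‖ ≤ R := by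
    intro z hz; simpa using hRC hz
  -- Lipschitz bound for h
  have hLip : ∀ u v : E D, h u ≤ h v + R * ‖u - v‖ := by
    intro u v
    obtain ⟨z, hz, hz'⟩ := hattain u
    have h1 : ⟪u, z⟫ = ⟪v, z⟫ + ⟪u - v, z⟫ := by
      rw [inner_sub_left]; ring
    have h2 : ⟪u - v, z⟫ ≤ ‖u - v‖ * ‖z‖ := real_inner_le_norm _ _
    have h3 : ‖u - v‖ * ‖z‖ ≤ ‖u - v‖ * R :=
      mul_le_mul_of_nonneg_left (hnorm z hz) (norm_nonneg _)
    have := hmem v z hz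
    nlinarith [hz']
  have hcont : Continuous h := by
    apply LipschitzWith.continuous (K := Real.toNNReal R)
    apply LipschitzWith.of_dist_le_mul
    intro u v
    rw [Real.dist_eq, abs_sub_le_iff]
    have h1 := hLip u v
    have h2 := hLip v u
    have hd : dist u v = ‖u - v‖ := dist_eq_norm u v
    have hd' : ‖v - u‖ = ‖u - v‖ := norm_sub_rev v u
    have hRR : (Real.toNNReal R : ℝ) = R := Real.coe_toNNReal R hR0.le
    rw [hd'] at h2
    constructor <;> rw [hRR, hd] <;> linarith
  -- the sphere
  have hsne : (sphere (0 : E D) 1).Nonempty := by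
    refine ⟨EuclideanSpace.single (⟨0, hD⟩ : Fin D) (1 : ℝ), ?_⟩
    simp [EuclideanSpace.norm_single]
  have hscomp : IsCompact (sphere (0 : E D) 1) := isCompact_sphere 0 1
  -- the "inradius at center c" function
  set F : (E D) → (E D) → ℝ := fun c u => h u - ⟪u, c⟫ with hF
  have hFcont : ∀ c : E D, Continuous (fun u => F c u) :=
    fun c => hcont.sub (continuous_id.inner continuous_const)
  set g : (E D) → ℝ := fun c => sInf ((fun u => F c u) '' sphere (0 : E D) 1) with hg
  have hgcomp : ∀ c : E D, IsCompact ((fun u => F c u) '' sphere (0 : E D) 1) :=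
    fun c => hscomp.image (hFcont c)
  have hgattain : ∀ c : E D, ∃ u, ‖u‖ = 1 ∧ g c = F c u := by
    intro c
    obtain ⟨u, hu, hu'⟩ := (hgcomp c).sInf_mem (hsne.image _)
    exact ⟨u, by simpa [mem_sphere_zero_iff_norm] using hu, hu'.symm⟩
  have hgle : ∀ (c : E D) (u : E D), ‖u‖ = 1 → g c ≤ F c u := by
    intro c u hu
    exact csInf_le (hgcomp c).bddBelow (mem_image_of_mem _ (by simpa [mem_sphere_zero_iff_norm]))
  -- any point whose "inradius" is nonneg gives a ball inside C
  have hgsub : ∀ c : E D, 0 ≤ g c → closedBall c (g c) ⊆ C := by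
    intro c hc x hx
    by_contra hxC
    obtain ⟨f, s, hfa, hfx⟩ := geometric_hahn_banach_closed_point hconv hC.isClosed hxC
    set v : E D := (InnerProductSpace.toDual ℝ _).symm f with hv
    have hfv : ∀ y : E D, ⟪v, y⟫ = f y := fun y => InnerProductSpace.toDual_symm_apply
    have hvne : v ≠ 0 := by
      intro h0
      obtain ⟨a, ha⟩ := hne
      have h1 : f a < s := hfa a ha
      have h2 : f a = 0 := by rw [← hfv, h0]; simp
      have h3 : f x = 0 := by rw [← hfv, h0]; simp
      linarith
    set u : E D := ‖v‖⁻¹ • v with hu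
    have hun : ‖u‖ = 1 := by
      rw [hu, norm_smul]
      simp [norm_ne_zero_iff.mpr hvne]
    have hvpos : (0:ℝ) < ‖v‖ := norm_pos_iff.mpr hvne
    obtain ⟨z, hz, hz'⟩ := hattain u
    -- h u < ⟪u, x⟫
    have h1 : ⟪u, z⟫ < ⟪u, x⟫ := by
      have : f z < f x := lt_trans (hfa z hz) hfx
      have hz2 : ⟪u, z⟫ = ‖v‖⁻¹ * f z := by rw [hu, real_inner_smul_left, hfv]
      have hx2 : ⟪u, x⟫ = ‖v‖⁻¹ * f x := by rw [hu, real_inner_smul_left, hfv]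
      rw [hz2, hx2]
      exact mul_lt_mul_of_pos_left this (inv_pos.mpr hvpos)
    -- but ⟪u, x⟫ ≤ h u
    have h2 : ⟪u, x⟫ ≤ h u := by
      have hxc : ‖x - c‖ ≤ g c := by
        rw [mem_closedBall, dist_eq_norm] at hx; exact hx
      have h3 : ⟪u, x - c⟫ ≤ ‖x - c‖ := by
        have := real_inner_le_norm u (x - c)
        rwa [hun, one_mul] at this
      have h4 : g c ≤ F c u := hgle c u hun
      have h5 : ⟪u, x⟫ = ⟪u, c⟫ + ⟪u, x - c⟫ := by rw [inner_sub_right]; ring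
      have : F c u = h u - ⟪u, c⟫ := rfl
      linarith
    rw [hz'] at h2
    linarith
  -- g is Lipschitz, hence continuous
  have hgLip : ∀ c c' : E D, g c ≤ g c' + ‖c - c'‖ := by
    intro c c'
    obtain ⟨u, hu, hu'⟩ := hgattain c'
    have h1 : g c ≤ F c u := hgle c u hu
    have h2 : F c u = F c' u + ⟪u, c' - c⟫ := by
      simp only [hF, inner_sub_right]; ring
    have h3 : ⟪u, c' - c⟫ ≤ ‖c' - c‖ := by
      have := real_inner_le_norm u (c' - c)
      rwa [hu, one_mul] at this
    have h4 : ‖c' - c‖ = ‖c - c'‖ := norm_sub_rev _ _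
    linarith [hu'.ge]
  have hgcont : Continuous g := by
    apply LipschitzWith.continuous (K := 1)
    apply LipschitzWith.of_dist_le_mul
    intro a b
    rw [Real.dist_eq, abs_sub_le_iff]
    have h1 := hgLip a b
    have h2 := hgLip b a
    have hd : dist a b = ‖a - b‖ := dist_eq_norm a b
    have hd' : ‖b - a‖ = ‖a - b‖ := norm_sub_rev b a
    rw [hd'] at h2
    have h1' : (((1:ℝ≥0) : ℝ)) * dist a b = ‖a - b‖ := by rw [NNReal.coe_one, one_mul, hd]
    constructor <;> rw [h1'] <;> linarith
  -- maximize g over C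
  obtain ⟨c₀, hc₀C, hmax⟩ := hC.exists_isMaxOn hne hgcont.continuousOn
  set r : ℝ := g c₀ with hr
  have hr0 : 0 ≤ r := by
    obtain ⟨u, hu, hu'⟩ := hgattain c₀
    have := hmem u c₀ hc₀C
    rw [hr, hu']
    simp only [hF]
    linarith
  -- contact directions
  set T : Set (E D) := {u | ‖u‖ = 1 ∧ F c₀ u = r} with hT
  have hTne : T.Nonempty := by
    obtain ⟨u, hu, hu'⟩ := hgattain c₀
    exact ⟨u, hu, hu'.symm⟩
  -- main claim : w ≤ (D+1) * r
  have hkey : w ≤ (D + 1 : ℝ) * r := by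
    by_cases h0 : (0 : E D) ∈ closure (convexHull ℝ T)
    · -- Caratheodory/approximation argument
      have hball : ∀ z ∈ C, ‖c₀ - z‖ ≤ 2 * R := by
        intro z hz
        calc ‖c₀ - z‖ ≤ ‖c₀‖ + ‖z‖ := norm_sub_le _ _
        _ ≤ R + R := add_le_add (hnorm _ hc₀C) (hnorm _ hz)
        _ = 2 * R := by ring
      refine le_of_forall_pos_le_add ?_
      intro ε hε
      set ε' : ℝ := ε / ((D + 1) * (2 * R) + 1) with hε'
      have hden : (0:ℝ) < (D + 1) * (2 * R) + 1 := by positivity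
      have hε'pos : 0 < ε' := div_pos hε hden
      obtain ⟨x, hxhull, hxnorm⟩ : ∃ x ∈ convexHull ℝ T, ‖x‖ < ε' := by
        obtain ⟨x, hx1, hx2⟩ := Metric.mem_closure_iff.mp h0 ε' hε'pos
        exact ⟨x, hx1, by simpa [dist_eq_norm, norm_sub_rev] using hx2⟩
      rw [convexHull_eq_union] at hxhull
      simp only [mem_iUnion, exists_prop] at hxhull
      obtain ⟨t, htT, hai, hxt⟩ := hxhull
      have hcard : (t.card : ℝ) ≤ (D : ℝ) + 1 := by
        have h1 : Fintype.card t ≤ finrank ℝ (vectorSpan ℝ (Set.range ((↑) : t → E D))) + 1 :=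
          hai.card_le_finrank_succ
        have h2 : finrank ℝ (vectorSpan ℝ (Set.range ((↑) : t → E D))) ≤ finrank ℝ (E D) :=
          Submodule.finrank_le _
        have h3 : finrank ℝ (E D) = D := finrank_euclideanSpace_fin
        have h4 : t.card = Fintype.card t := (Fintype.card_coe t).symm
        have : t.card ≤ D + 1 := by omega
        exact_mod_cast this
      rw [Finset.convexHull_eq] at hxt
      obtain ⟨lam, hlam0, hlam1, hlamx⟩ := hxt
      rw [t.centerMass_eq_of_sum_1 _ hlam1] at hlamx
      simp only [id] at hlamx
      -- find an index with large weight
      have htne : t.Nonempty := by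
        rcases Finset.eq_empty_or_nonempty t with h | h
        · exfalso; rw [h] at hlam1; simp at hlam1
        · exact h
      obtain ⟨j, hjt, hjlam⟩ : ∃ j ∈ t, 1 / ((D:ℝ) + 1) ≤ lam j := by
        by_contra hcon
        push_neg at hcon
        have hsum : (1:ℝ) = ∑ y ∈ t, lam y := hlam1.symm
        have hlt : ∑ y ∈ t, lam y < ∑ y ∈ t, 1 / ((D:ℝ) + 1) :=
          Finset.sum_lt_sum_of_nonempty htne fun y hy => hcon y hy
        have hle : ∑ y ∈ t, 1 / ((D:ℝ) + 1) ≤ 1 := by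
          rw [Finset.sum_const, nsmul_eq_mul]
          have hD1 : (0:ℝ) < (D:ℝ) + 1 := by positivity
          rw [mul_one_div, div_le_one hD1]
          linarith [hcard]
        linarith
      have hjT : j ∈ T := htT hjt
      obtain ⟨hjnorm, hjF⟩ := hjT
      have hlamjpos : 0 < lam j := lt_of_lt_of_le (by positivity) hjlam
      -- the width bound in direction j
      have hinf : ∃ z ∈ C, sInf ((fun z => ⟪j, z⟫) '' C) = ⟪j, z⟫ := by
        obtain ⟨y, hy, hy'⟩ := (hcomp j).sInf_mem (hne.image _)
        exact ⟨y, hy, hy'.symm⟩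
      obtain ⟨z, hzC, hzinf⟩ := hinf
      -- bound ⟪j, c₀ - z⟫ ≤ D * r + (D+1) * ε' * (2R)
      have hsplit : lam j • j = x - ∑ y ∈ t.erase j, lam y • y := by
        rw [← Finset.sum_erase_add t _ hjt] at hlamx
        rw [← hlamx]; abel
      have hbound : lam j * ⟪j, c₀ - z⟫ ≤ ε' * (2 * R) + (1 - lam j) * r := by
        have h1 : ⟪lam j • j, c₀ - z⟫ = lam j * ⟪j, c₀ - z⟫ := real_inner_smul_left _ _ _
        have h2 : ⟪lam j • j, c₀ - z⟫
            = ⟪x, c₀ - z⟫ - ∑ y ∈ t.erase j, lam y * ⟪y, c₀ - z⟫ := by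
          rw [hsplit, inner_sub_left, sum_inner]
          congr 1
          exact Finset.sum_congr rfl fun y _ => real_inner_smul_left _ _ _
        have h3 : ⟪x, c₀ - z⟫ ≤ ε' * (2 * R) := by
          calc ⟪x, c₀ - z⟫ ≤ ‖x‖ * ‖c₀ - z‖ := real_inner_le_norm _ _
          _ ≤ ε' * (2 * R) := by
              apply mul_le_mul hxnorm.le (hball z hzC) (norm_nonneg _) hε'pos.le
        have h4 : ∀ y ∈ t.erase j, -(lam y * r) ≤ lam y * ⟪y, c₀ - z⟫ := by
          intro y hy
          have hyT : y ∈ T := htT (Finset.mem_of_mem_erase hy)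
          obtain ⟨hy1, hy2⟩ := hyT
          have h5 : ⟪y, z⟫ ≤ h y := hmem y z hzC
          have h6 : ⟪y, c₀ - z⟫ = ⟪y, c₀⟫ - ⟪y, z⟫ := by
            rw [inner_sub_right]
          have h7 : -r ≤ ⟪y, c₀ - z⟫ := by
            have : F c₀ y = h y - ⟪y, c₀⟫ := rfl
            linarith [hy2.ge, hy2.le]
          have h8 : 0 ≤ lam y := hlam0 y (Finset.mem_of_mem_erase hy)
          nlinarith
        have h9 : ∑ y ∈ t.erase j, -(lam y * r) ≤ ∑ y ∈ t.erase j, lam y * ⟪y, c₀ - z⟫ :=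
          Finset.sum_le_sum h4
        have h10 : ∑ y ∈ t.erase j, -(lam y * r) = -(1 - lam j) * r := by
          rw [Finset.sum_neg_distrib, ← Finset.sum_mul]
          have : ∑ y ∈ t.erase j, lam y = 1 - lam j := by
            have := Finset.sum_erase_add t lam hjt
            linarith
          rw [this]; ring
        nlinarith
      -- conclude
      have hsup : h j - ⟪j, c₀⟫ = r := hjF
      have hwj := hw j hjnorm
      have hFact : (h : (E D) → ℝ) j = sSup ((fun z => ⟪j, z⟫) '' C) := rfl
      have hinner : ⟪j, c₀ - z⟫ = ⟪j, c₀⟫ - ⟪j, z⟫ := by rw [inner_sub_right]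
      have hDr : ⟪j, c₀⟫ - ⟪j, z⟫ ≤ (ε' * (2 * R) + (1 - lam j) * r) / lam j := by
        rw [le_div_iff₀ hlamjpos]
        rw [← hinner]
        calc ⟪j, c₀ - z⟫ * lam j = lam j * ⟪j, c₀ - z⟫ := by ring
        _ ≤ _ := hbound
      have hfrac : (ε' * (2 * R) + (1 - lam j) * r) / lam j
          ≤ ((D:ℝ) + 1) * (ε' * (2 * R)) + (D:ℝ) * r := by
        rw [div_le_iff₀ hlamjpos]
        have hinv : 1 ≤ ((D:ℝ) + 1) * lam j := by
          have : (0:ℝ) < (D:ℝ)+1 := by positivity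
          calc (1:ℝ) = ((D:ℝ)+1) * (1/((D:ℝ)+1)) := by field_simp
          _ ≤ ((D:ℝ)+1) * lam j := by
              apply mul_le_mul_of_nonneg_left hjlam this.le
        have hlamle1 : lam j ≤ 1 := by
          have := Finset.sum_erase_add t lam hjt
          have hpos : 0 ≤ ∑ y ∈ t.erase j, lam y :=
            Finset.sum_nonneg fun y hy => hlam0 y (Finset.mem_of_mem_erase hy)
          linarith
        have hεR : 0 ≤ ε' * (2*R) := by positivity
        nlinarith
      -- width in direction j: w ≤ h j - sInf = (h j - ⟪j,c₀⟫) + (⟪j,c₀⟫ - ⟪j,z⟫)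
      have : w ≤ r + (((D:ℝ) + 1) * (ε' * (2 * R)) + (D:ℝ) * r) := by
        rw [hzinf] at hwj
        have := hDr.trans hfrac
        linarith [hsup.ge, hsup.le, hwj]
      have hεfinal : ((D:ℝ) + 1) * (ε' * (2 * R)) ≤ ε := by
        rw [hε']
        rw [div_mul_eq_mul_div, mul_div_assoc']
        rw [div_le_iff₀ hden]
        nlinarith [hε.le]
      linarith
    · -- can push the ball further : contradiction with maximality
      exfalso
      obtain ⟨f, s, hfa, hfs⟩ := geometric_hahn_banach_closed_point
        ((convex_convexHull ℝ T).closure) isClosed_closure h0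
      set v : E D := (InnerProductSpace.toDual ℝ _).symm f with hv
      have hfv : ∀ y : E D, ⟪v, y⟫ = f y := fun y => InnerProductSpace.toDual_symm_apply
      have hs0 : s < 0 := by simpa using hfs
      have hTv : ∀ u ∈ T, ⟪v, u⟫ < s := by
        intro u hu
        rw [hfv]
        exact hfa u (subset_closure (subset_convexHull ℝ T hu))
      set δ : ℝ := -s with hδ
      have hδpos : 0 < δ := by simp [hδ]; linarith
      -- the set of directions not strongly improved
      set A : Set (E D) := sphere (0 : E D) 1 ∩ {u | -δ/2 ≤ ⟪v, u⟫} with hA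
      have hAcomp : IsCompact A :=
        hscomp.inter_right (isClosed_le continuous_const (continuous_const.inner continuous_id))
      have hAne : A.Nonempty := by
        obtain ⟨u₀, hu₀⟩ := hsne
        rcases le_or_gt 0 ⟪v, u₀⟫ with h | h
        · exact ⟨u₀, hu₀, by simp only [mem_setOf_eq]; linarith⟩
        · refine ⟨-u₀, ?_, ?_⟩
          · simpa [mem_sphere_zero_iff_norm] using (mem_sphere_zero_iff_norm.mp hu₀)
          · simp only [mem_setOf_eq, inner_neg_right]
            linarith
      -- F c₀ > r on A
      have hAgt : ∀ u ∈ A, r < F c₀ u := by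
        rintro u ⟨hu1, hu2⟩
        have hun : ‖u‖ = 1 := mem_sphere_zero_iff_norm.mp hu1
        have hge : r ≤ F c₀ u := hgle c₀ u hun
        rcases eq_or_lt_of_le hge with heq | hlt
        · exfalso
          have huT : u ∈ T := ⟨hun, heq.symm⟩
          have := hTv u huT
          simp only [mem_setOf_eq] at hu2
          linarith
        · exact hlt
      -- min of F c₀ on A
      obtain ⟨uA, huA, huAmin⟩ := hAcomp.exists_isMinOn hAne (hFcont c₀).continuousOn
      set ε : ℝ := F c₀ uA - r with hεdef
      have hεpos : 0 < ε := by simp [hεdef]; linarith [hAgt uA huA]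
      have hvpos : (0:ℝ) < ‖v‖ + 1 := by positivity
      set τ : ℝ := ε / (2 * (‖v‖ + 1)) with hτ
      have hτpos : 0 < τ := by positivity
      set c₁ : E D := c₀ + τ • v with hc₁
      -- lower bound for F c₁ on the sphere
      clear_value v δ ε τ c₁ F r g h
      have hmain : ∀ u : E D, ‖u‖ = 1 → r + min (ε/2) (τ * δ/2) ≤ F c₁ u := by
        intro u hun
        have hFc₁ : F c₁ u = F c₀ u - τ * ⟪v, u⟫ := by
          simp only [hF, hc₁, inner_add_right, real_inner_smul_right]
          rw [real_inner_comm u v]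
          ring
        by_cases hu : u ∈ A
        · have h1 : r + ε ≤ F c₀ u := by
            have h2 : F c₀ uA ≤ F c₀ u := (isMinOn_iff.mp huAmin) u hu
            rw [hεdef]
            linarith
          have h2 : ⟪v, u⟫ ≤ ‖v‖ := by
            have := real_inner_le_norm v u
            rwa [hun, mul_one] at this
          have h3 : τ * ⟪v, u⟫ ≤ ε / 2 := by
            rcases le_or_gt ⟪v, u⟫ 0 with h | h
            · have : τ * ⟪v, u⟫ ≤ 0 := mul_nonpos_of_nonneg_of_nonpos hτpos.le h
              linarith
            · calc τ * ⟪v, u⟫ ≤ τ * ‖v‖ := mul_le_mul_of_nonneg_left h2 hτpos.le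
              _ = ε * ‖v‖ / (2 * (‖v‖ + 1)) := by rw [hτ]; ring
              _ ≤ ε / 2 := by
                  rw [div_le_div_iff₀ (by positivity) (by norm_num)]
                  nlinarith
          rw [hFc₁]
          refine le_trans (add_le_add_right (min_le_left _ _) r) ?_
          linarith only [h1, h3]
        · have h1 : ⟪v, u⟫ < -δ/2 := by
            have hu1 : u ∈ sphere (0 : E D) 1 := by
              simpa [mem_sphere_zero_iff_norm] using hun
            by_contra hcon
            push_neg at hcon
            exact hu ⟨hu1, hcon⟩
          have h2 : r ≤ F c₀ u := by rw [hr]; exact hgle c₀ u hun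
          have h3 : τ * δ / 2 ≤ -(τ * ⟪v, u⟫) := by nlinarith
          rw [hFc₁]
          refine le_trans (add_le_add_right (min_le_right _ _) r) ?_
          linarith only [h2, h3]
      set m : ℝ := min (ε/2) (τ * δ/2) with hm
      have hmpos : 0 < m := lt_min (by positivity) (by positivity)
      have hg₁ : r + m ≤ g c₁ := by
        obtain ⟨u, hu, hu'⟩ := hgattain c₁
        rw [hu']
        exact hmain u hu
      have hc₁C : c₁ ∈ C := by
        have hg₁0 : 0 ≤ g c₁ := by linarith
        exact hgsub c₁ hg₁0 (mem_closedBall_self hg₁0)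
      have h6 : g c₁ ≤ g c₀ := hmax hc₁C
      rw [← hr] at h6
      linarith
  -- conclude
  refine ⟨c₀, fun x hx => hgsub c₀ hr0 ?_⟩
  have hD2 : (0:ℝ) < 2 * D := by
    have : (1:ℝ) ≤ D := by exact_mod_cast hD
    linarith
  have hle : w / (2 * D) ≤ r := by
    rw [div_le_iff₀ hD2]
    have : (1:ℝ) ≤ D := by exact_mod_cast hD
    nlinarith
  exact closedBall_subset_closedBall hle hx

theorem volume_ge_of_min_width (D : ℕ) (hD : 1 ≤ D)
    (C : Set (EuclideanSpace ℝ (Fin D))) (hC : IsCompact C) (hconv : Convex ℝ C)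
    (w : ℝ)
    (hw : IsLeast { x : ℝ | ∃ α : EuclideanSpace ℝ (Fin D), ‖α‖ = 1 ∧
        x = sSup ((fun z => (inner ℝ α z : ℝ)) '' C) - sInf ((fun z => (inner ℝ α z : ℝ)) '' C) } w) :
    ENNReal.ofReal ((w / (2 * D)) ^ D) *
        MeasureTheory.volume (Metric.ball (0 : EuclideanSpace ℝ (Fin D)) 1)
      ≤ MeasureTheory.volume C := by
  rcases C.eq_empty_or_nonempty with hCe | hne
  · obtain ⟨α, hα, hweq⟩ := hw.1
    rw [hCe] at hweq
    simp [Real.sSup_empty, Real.sInf_empty] at hweq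
    subst hweq
    have : ((0:ℝ) / (2 * D)) ^ D = 0 := by
      rw [zero_div, zero_pow (by omega)]
    rw [this]
    simp
  · have hw0 : 0 ≤ w := by
      obtain ⟨α, hα, hweq⟩ := hw.1
      obtain ⟨z, hz⟩ := hne
      have hcomp : IsCompact ((fun z => (inner ℝ α z : ℝ)) '' C) :=
        hC.image (continuous_const.inner continuous_id)
      have h1 : sInf ((fun z => (inner ℝ α z : ℝ)) '' C) ≤ (inner ℝ α z : ℝ) :=
        csInf_le hcomp.bddBelow (mem_image_of_mem _ hz)
      have h2 : (inner ℝ α z : ℝ) ≤ sSup ((fun z => (inner ℝ α z : ℝ)) '' C) :=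
        le_csSup hcomp.bddAbove (mem_image_of_mem _ hz)
      linarith [hweq.ge, hweq.le]
    rcases eq_or_lt_of_le hw0 with h0 | hpos
    · rw [← h0]
      have : ((0:ℝ) / (2 * D)) ^ D = 0 := by
        rw [zero_div, zero_pow (by omega)]
      rw [this]
      simp
    · obtain ⟨c, hball⟩ := exists_closedBall_subset D hD C hC hconv hne w
        (fun α hα => hw.2 ⟨α, hα, rfl⟩)
      have hsub : Metric.ball c (w / (2 * D)) ⊆ C :=
        (Metric.ball_subset_closedBall).trans hball
      have hrpos : 0 < w / (2 * D) := by
        apply div_pos hpos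
        have : (1:ℝ) ≤ D := by exact_mod_cast hD
        linarith
      calc ENNReal.ofReal ((w / (2 * D)) ^ D) * volume (Metric.ball (0 : EuclideanSpace ℝ (Fin D)) 1)
          = volume (Metric.ball c (w / (2 * D))) := by
            rw [Measure.addHaar_ball_of_pos volume c hrpos, finrank_euclideanSpace_fin]
      _ ≤ volume C := measure_mono hsub
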